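/- (Convex case with error-free line search, accelerated-then-sublinear rate.) Assume f is convex, differentiable, and ∇f is L-Lipschitz on ℝⁿ. Let θ ∈ (0,1), a ∈ [0,1), b ≥ 0, 0 < λ̲ ≤ λ_max, B₂ > 0, and let x* be a minimizer of F = f + h over ℝⁿ. Suppose sequences x^i, g^i ∈ ℝⁿ and λ_i ∈ [λ̲, λ_max] satisfy for all i ≥ 0: x^{i+1} = prox_{λ_i h}(x^i − λ_i g^i); ‖g^i − ∇f(x^i)‖² ≤ (a²/λ_i² + b²)‖x^{i+1} − x^i‖²; F(x^{i+1}) − F(x^i) ≤ −(θ λ_i / 2)‖G_{λ_i}(x^i, g^i)‖²; and ‖x^i − x*‖ ≤ B₂. Then for every N ≥ 2, F(x^N) − F(x*) ≤ max{ (1/√2)^{N−1}(F(x⁰) − F(x*)), 8Υ₄²/(θ λ̲ (N−1)) }, where Υ₄ = B₂((L + b)λ_max + a + 1). -/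

import Mathlib

set_option maxHeartbeats 1000000

open RealInnerProductSpace

section Aux

variable {E : Type*} [NormedAddCommGroup E] [InnerProductSpace ℝ E]

lemma stmt13_grad_ineq [CompleteSpace E] (f : E → ℝ) (hfconv : ConvexOn ℝ Set.univ f)
    (hf : Differentiable ℝ f) (x y : E) :
    ⟪gradient f x, y - x⟫ ≤ f y - f x := by
  set v := y - x with hv
  have h1 : HasDerivAt (fun t : ℝ => x + t • v) v 0 := by
    simpa using ((hasDerivAt_id (0:ℝ)).smul_const v).const_add x
  have h2 : HasFDerivAt f (fderiv ℝ f x) (x + (0:ℝ) • v) := by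
    simpa using (hf x).hasFDerivAt
  have hg : HasDerivAt (fun t : ℝ => f (x + t • v)) (fderiv ℝ f x v) 0 := by
    exact h2.comp_hasDerivAt 0 h1
  have hgc : ConvexOn ℝ Set.univ (fun t : ℝ => f (x + t • v)) := by
    have := hfconv.comp_affineMap (AffineMap.lineMap x y)
    simp only [Set.preimage_univ] at this
    convert this using 1
    iterate 4 rfl
    funext t
    simp [AffineMap.lineMap_apply, hv, Function.comp]
    rw [add_comm]
  have hs := hgc.le_slope_of_hasDerivAt (Set.mem_univ (0:ℝ)) (Set.mem_univ (1:ℝ))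
    one_pos hg
  rw [slope_def_field] at hs
  simp only [one_smul, zero_smul, add_zero, sub_zero, div_one] at hs
  have hxy : x + v = y := by simp [hv]
  rw [hxy] at hs
  have hinner : ⟪gradient f x, v⟫ = fderiv ℝ f x v := by
    show ⟪(InnerProductSpace.toDual ℝ E).symm (fderiv ℝ f x), v⟫ = _
    exact InnerProductSpace.toDual_symm_apply
  rw [hinner]
  linarith [hs]

lemma stmt13_prox_subgrad (h : E → ℝ) (hconv : ConvexOn ℝ Set.univ h)
    (lamv : ℝ) (hl : 0 < lamv) (u p : E)
    (hp : ∀ y, 1 / (2 * lamv) * ‖p - u‖ ^ 2 + h p ≤ 1 / (2 * lamv) * ‖y - u‖ ^ 2 + h y)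
    (y : E) : ⟪u - p, y - p⟫ ≤ lamv * (h y - h p) := by
  have key : ∀ t : ℝ, 0 < t → t ≤ 1 →
      ⟪u - p, y - p⟫ ≤ lamv * (h y - h p) + t * (‖y - p‖ ^ 2 / 2) := by
    intro t ht ht1
    set yt : E := p + t • (y - p) with hyt
    have hcv : h yt ≤ (1 - t) * h p + t * h y := by
      have := hconv.2 (Set.mem_univ p) (Set.mem_univ y) (by linarith : (0:ℝ) ≤ 1 - t)
        ht.le (by ring)
      have he : (1 - t) • p + t • y = yt := by
        rw [hyt]; module
      rwa [he] at this
    have hnorm : ‖yt - u‖ ^ 2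
        = ‖p - u‖ ^ 2 + 2 * (t * ⟪p - u, y - p⟫) + t ^ 2 * ‖y - p‖ ^ 2 := by
      have he : yt - u = (p - u) + t • (y - p) := by rw [hyt]; module
      rw [he, norm_add_sq_real, real_inner_smul_right, norm_smul]
      rw [Real.norm_eq_abs, mul_pow, sq_abs]
    have hpy := hp yt
    rw [hnorm] at hpy
    have hstep : 0 ≤ t * (2 * ⟪p - u, y - p⟫ + t * ‖y - p‖ ^ 2
        + 2 * lamv * (h y - h p)) := by
      have h2l : (0:ℝ) < 2 * lamv := by linarith
      have hm := mul_le_mul_of_nonneg_left hpy h2l.le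
      have hc : 2 * lamv * (1 / (2 * lamv)) = 1 := by field_simp
      nlinarith [hm, hc, hcv, h2l]
    have hstep2 : 0 ≤ 2 * ⟪p - u, y - p⟫ + t * ‖y - p‖ ^ 2 + 2 * lamv * (h y - h p) :=
      (mul_nonneg_iff_of_pos_left ht).mp hstep
    have hflip : ⟪u - p, y - p⟫ = - ⟪p - u, y - p⟫ := by
      rw [show u - p = -(p - u) from (neg_sub p u).symm, inner_neg_left]
    rw [hflip]
    linarith
  by_contra hA
  push_neg at hA
  set A := ⟪u - p, y - p⟫
  set B := lamv * (h y - h p)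
  set C := ‖y - p‖ ^ 2 / 2 with hC
  have hCnn : 0 ≤ C := by positivity
  set t := min 1 ((A - B) / (2 * (C + 1))) with htdef
  have hABpos : 0 < A - B := by linarith
  have ht0 : 0 < t := by
    apply lt_min one_pos
    positivity
  have ht1 : t ≤ 1 := min_le_left _ _
  have hk := key t ht0 ht1
  have htle : t ≤ (A - B) / (2 * (C + 1)) := min_le_right _ _
  have h1 : t * C ≤ (A - B) / (2 * (C + 1)) * C :=
    mul_le_mul_of_nonneg_right htle hCnn
  have h2 : (A - B) / (2 * (C + 1)) * C < A - B := by
    rw [div_mul_eq_mul_div, div_lt_iff₀ (by positivity)]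
    nlinarith
  linarith

end Aux

lemma stmt13_rec_rate (c : ℝ) (hc : 0 < c) (δ : ℕ → ℝ)
    (hrec : ∀ i, δ (i + 1) + c * δ (i + 1) ^ 2 ≤ δ i)
    (N : ℕ) (hN : 2 ≤ N) :
    δ N ≤ max ((1 / Real.sqrt 2) ^ (N - 1) * δ 0) (4 / (c * ((N : ℝ) - 1))) := by
  have hN1 : (1:ℝ) ≤ (N : ℝ) - 1 := by
    have : (2:ℝ) ≤ (N : ℝ) := by exact_mod_cast hN
    linarith
  have hcN : 0 < c * ((N : ℝ) - 1) := by nlinarith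
  have hanti : Antitone δ :=
    antitone_nat_of_succ_le fun i => by nlinarith [hrec i, sq_nonneg (δ (i+1))]
  by_cases hpos : 0 < δ N
  swap
  · push_neg at hpos
    refine le_trans hpos (le_max_of_le_right ?_)
    positivity
  have hposall : ∀ i ≤ N, 0 < δ i := fun i hi => lt_of_lt_of_le hpos (hanti hi)
  set P : ℕ → Prop := fun i => 2 * δ (i + 1) ≤ δ i with hP
  classical
  have key : ∀ M ≤ N,
      δ M ≤ δ 0 * (1 / 2) ^ ((Finset.range M).filter P).card ∧
      (↑(M - ((Finset.range M).filter P).card) : ℝ) * (c / 2) ≤ 1 / δ M - 1 / δ 0 := by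
    intro M
    induction M with
    | zero => intro _; simp
    | succ m ih =>
      intro hMN
      have hmN : m ≤ N := Nat.le_of_succ_le hMN
      obtain ⟨ihA, ihB⟩ := ih hmN
      have hδm : 0 < δ m := hposall m hmN
      have hδm1 : 0 < δ (m + 1) := hposall (m + 1) hMN
      have hcard_le : ((Finset.range m).filter P).card ≤ m :=
        le_trans (Finset.card_filter_le _ _) (by simp)
      rw [Finset.range_add_one, Finset.filter_insert]
      by_cases hPm : P m
      · rw [if_pos hPm, Finset.card_insert_of_notMem (by simp)]
        constructor
        · have h1 : δ (m + 1) ≤ δ m * (1 / 2) := by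
            rw [hP] at hPm; linarith
          calc δ (m + 1) ≤ δ m * (1/2) := h1
            _ ≤ δ 0 * (1/2) ^ ((Finset.range m).filter P).card * (1/2) := by
                have : (0:ℝ) ≤ 1/2 := by norm_num
                nlinarith
            _ = δ 0 * (1/2) ^ (((Finset.range m).filter P).card + 1) := by ring
        · have hcount : m + 1 - (((Finset.range m).filter P).card + 1)
              = m - ((Finset.range m).filter P).card := by omega
          rw [hcount]
          have hinv : 1 / δ m ≤ 1 / δ (m + 1) :=
            one_div_le_one_div_of_le hδm1 (hanti (Nat.le_succ m))
          linarith
      · rw [if_neg hPm]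
        constructor
        · exact le_trans (hanti (Nat.le_succ m)) ihA
        · have hcount : ((m + 1) - ((Finset.range m).filter P).card)
              = (m - ((Finset.range m).filter P).card) + 1 := by omega
          rw [hcount]
          push_cast
          have hPm' : δ m < 2 * δ (m + 1) := not_le.mp hPm
          have hstep : 1 / δ m + c / 2 ≤ 1 / δ (m + 1) := by
            rw [div_add_div _ _ (ne_of_gt hδm) (by norm_num : (2:ℝ) ≠ 0),
              div_le_div_iff₀ (by positivity) hδm1]
            nlinarith [hrec m, mul_nonneg (mul_nonneg hc.le hδm1.le)
              (sub_nonneg.mpr hPm'.le)]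
          linarith
  obtain ⟨hA, hB⟩ := key N le_rfl
  set k := ((Finset.range N).filter P).card with hk
  have hkN : k ≤ N := le_trans (Finset.card_filter_le _ _) (by simp)
  have hδ0 : 0 < δ 0 := hposall 0 (by omega)
  rcases le_or_gt (N - 1) (2 * k) with hcase | hcase
  · refine le_max_of_le_left ?_
    have hs2 : (1 / Real.sqrt 2 : ℝ) ^ 2 = 1 / 2 := by
      rw [div_pow, one_pow, Real.sq_sqrt (by norm_num : (0:ℝ) ≤ 2)]
    have hhalf : ((1:ℝ)/2) ^ k = (1 / Real.sqrt 2) ^ (2 * k) := by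
      rw [pow_mul, hs2]
    have hbase0 : (0:ℝ) ≤ 1 / Real.sqrt 2 := by positivity
    have hbase1 : (1:ℝ) / Real.sqrt 2 ≤ 1 := by
      rw [div_le_one (by positivity)]
      nlinarith [Real.sq_sqrt (by norm_num : (0:ℝ) ≤ 2), Real.sqrt_nonneg 2]
    have hpow : (1 / Real.sqrt 2 : ℝ) ^ (2 * k) ≤ (1 / Real.sqrt 2) ^ (N - 1) :=
      pow_le_pow_of_le_one hbase0 hbase1 hcase
    calc δ N ≤ δ 0 * (1/2) ^ k := hA
      _ = (1 / Real.sqrt 2) ^ (2 * k) * δ 0 := by rw [hhalf]; ring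
      _ ≤ (1 / Real.sqrt 2) ^ (N - 1) * δ 0 :=
          mul_le_mul_of_nonneg_right hpow hδ0.le
  · refine le_max_of_le_right ?_
    have hm : N - 1 ≤ 2 * (N - k) := by omega
    have hm' : ((N:ℝ) - 1) / 2 ≤ (↑(N - k) : ℝ) := by
      have : ((N - 1 : ℕ) : ℝ) ≤ ((2 * (N - k) : ℕ) : ℝ) := by exact_mod_cast hm
      push_cast [Nat.cast_sub (show 1 ≤ N by omega), Nat.cast_sub hkN] at this ⊢
      linarith
    have hBineq : ((N:ℝ) - 1) / 2 * (c / 2) ≤ 1 / δ N := by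
      have h0 : (0:ℝ) ≤ 1 / δ 0 := by positivity
      nlinarith [hB, mul_le_mul_of_nonneg_right hm' (le_of_lt (by positivity : (0:ℝ) < c/2))]
    rw [le_div_iff₀ hcN]
    have hrearr : ((N:ℝ) - 1) / 2 * (c / 2) = c * ((N:ℝ) - 1) / 4 := by ring
    rw [hrearr] at hBineq
    have := mul_le_mul_of_nonneg_left hBineq hpos.le
    rw [mul_one_div, div_self (ne_of_gt hpos)] at this
    nlinarith

/-- convex case with error-free line search; the optimality gap decays at
an accelerated-then-sublinear rate. -/
theorem stmt13 {n : ℕ}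
    (f h : EuclideanSpace ℝ (Fin n) → ℝ)
    (hconv : ConvexOn ℝ Set.univ h)
    (hfconv : ConvexOn ℝ Set.univ f)
    (hf : Differentiable ℝ f)
    (L : ℝ) (hL : 0 < L)
    (hlip : ∀ u v : EuclideanSpace ℝ (Fin n),
      ‖gradient f u - gradient f v‖ ≤ L * ‖u - v‖)
    (prox : ℝ → EuclideanSpace ℝ (Fin n) → EuclideanSpace ℝ (Fin n))
    (hprox : ∀ lam : ℝ, 0 < lam → ∀ u y : EuclideanSpace ℝ (Fin n),
      1 / (2 * lam) * ‖prox lam u - u‖ ^ 2 + h (prox lam u)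
        ≤ 1 / (2 * lam) * ‖y - u‖ ^ 2 + h y)
    (θ a b lamLow lamMax B2 : ℝ)
    (hθ0 : 0 < θ) (hθ1 : θ < 1)
    (ha0 : 0 ≤ a) (ha1 : a < 1) (hb : 0 ≤ b)
    (hlamLow : 0 < lamLow) (hord : lamLow ≤ lamMax) (hB2 : 0 < B2)
    (F : EuclideanSpace ℝ (Fin n) → ℝ) (hF : ∀ y, F y = f y + h y)
    (xstar : EuclideanSpace ℝ (Fin n)) (hxstar : ∀ y, F xstar ≤ F y)
    (x g : ℕ → EuclideanSpace ℝ (Fin n))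
    (lam : ℕ → ℝ) (hlam : ∀ i, lam i ∈ Set.Icc lamLow lamMax)
    (hupd : ∀ i, x (i + 1) = prox (lam i) (x i - lam i • g i))
    (hgrad : ∀ i, ‖g i - gradient f (x i)‖ ^ 2
      ≤ (a ^ 2 / (lam i) ^ 2 + b ^ 2) * ‖x (i + 1) - x i‖ ^ 2)
    (hdesc : ∀ i, F (x (i + 1)) - F (x i)
      ≤ -(θ * lam i / 2) * ‖(lam i)⁻¹ • (x i - prox (lam i) (x i - lam i • g i))‖ ^ 2)
    (hbd : ∀ i, ‖x i - xstar‖ ≤ B2) :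
    ∀ N : ℕ, 2 ≤ N →
      F (x N) - F xstar
        ≤ max ((1 / Real.sqrt 2) ^ (N - 1) * (F (x 0) - F xstar))
            (8 * (B2 * ((L + b) * lamMax + a + 1)) ^ 2 / (θ * lamLow * ((N : ℝ) - 1))) := by
  intro N hN
  set Υ : ℝ := B2 * ((L + b) * lamMax + a + 1) with hΥ
  have hlamMax : 0 < lamMax := lt_of_lt_of_le hlamLow hord
  have hΥpos : 0 < Υ := by
    have : 0 < (L + b) * lamMax := by positivity
    nlinarith
  set c : ℝ := θ * lamLow / (2 * Υ ^ 2) with hc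
  have hcpos : 0 < c := by positivity
  set δ : ℕ → ℝ := fun i => F (x i) - F xstar with hδ
  have hδnn : ∀ i, 0 ≤ δ i := fun i => sub_nonneg.mpr (hxstar (x i))
  have hrec : ∀ i, δ (i + 1) + c * δ (i + 1) ^ 2 ≤ δ i := by
    intro i
    obtain ⟨hlo, hhi⟩ := hlam i
    have hlampos : 0 < lam i := lt_of_lt_of_le hlamLow hlo
    set p : EuclideanSpace ℝ (Fin n) := x (i + 1) with hp
    set u : EuclideanSpace ℝ (Fin n) := x i - lam i • g i with hu
    have hpu : p = prox (lam i) u := hupd i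
    set G : EuclideanSpace ℝ (Fin n) := (lam i)⁻¹ • (x i - p) with hG
    set D : ℝ := ‖p - x i‖ with hD
    have hDnn : 0 ≤ D := norm_nonneg _
    have hGnorm : ‖G‖ = (lam i)⁻¹ * D := by
      rw [hG, norm_smul, norm_inv, Real.norm_eq_abs, abs_of_pos hlampos, hD, norm_sub_rev]
    -- prox subgradient inequality
    have hps : ⟪u - p, xstar - p⟫ ≤ lam i * (h xstar - h p) := by
      apply stmt13_prox_subgrad h hconv (lam i) hlampos u p
      intro y
      rw [hpu]
      exact hprox (lam i) hlampos u y
    -- gradient inequality for f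
    have hgi : ⟪gradient f p, xstar - p⟫ ≤ f xstar - f p :=
      stmt13_grad_ineq f hfconv hf p xstar
    -- identity: (lam i)⁻¹ • (u - p) = G - g i
    have hupe : u - p = (x i - p) - lam i • g i := by rw [hu]; module
    have hw : (lam i)⁻¹ • (u - p) = G - g i := by
      rw [hG, hupe, smul_sub, smul_smul, inv_mul_cancel₀ (ne_of_gt hlampos), one_smul]
    set w : EuclideanSpace ℝ (Fin n) := gradient f p + (G - g i) with hwdef
    have hsum : δ (i + 1) ≤ ⟪w, p - xstar⟫ := by
      have e1 : ⟪gradient f p, p - xstar⟫ = -⟪gradient f p, xstar - p⟫ := by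
        rw [← inner_neg_right, neg_sub]
      have e2 : ⟪G - g i, p - xstar⟫ = (lam i)⁻¹ * (-⟪u - p, xstar - p⟫) := by
        rw [← hw, real_inner_smul_left, ← inner_neg_right, neg_sub]
      have e3 : (lam i)⁻¹ * (-(lam i * (h xstar - h p)))
          ≤ (lam i)⁻¹ * (-⟪u - p, xstar - p⟫) :=
        mul_le_mul_of_nonneg_left (neg_le_neg hps) (inv_nonneg.mpr hlampos.le)
      have e4 : (lam i)⁻¹ * (-(lam i * (h xstar - h p))) = h p - h xstar := by
        field_simp
        ring
      rw [e4] at e3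
      have hδval : δ (i + 1) = f p + h p - (f xstar + h xstar) := by
        have : δ (i + 1) = F p - F xstar := rfl
        rw [this, hF p, hF xstar]
      rw [hwdef, inner_add_left, e1, e2, hδval]
      linarith [e3, hgi]
    have hcs : ⟪w, p - xstar⟫ ≤ ‖w‖ * B2 := by
      refine le_trans (real_inner_le_norm _ _) ?_
      have hb2 : ‖p - xstar‖ ≤ B2 := hbd (i + 1)
      exact mul_le_mul_of_nonneg_left hb2 (norm_nonneg _)
    -- norm bound on w
    have hwdecomp : w = G + (gradient f p - gradient f (x i)) + (gradient f (x i) - g i) := by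
      rw [hwdef]; abel
    have htri : ‖w‖ ≤ ‖G‖ + ‖gradient f p - gradient f (x i)‖ + ‖gradient f (x i) - g i‖ := by
      rw [hwdecomp]; exact norm_add₃_le
    have hlipb : ‖gradient f p - gradient f (x i)‖ ≤ L * D := by
      have := hlip p (x i); rwa [← hD] at this
    have herr : ‖gradient f (x i) - g i‖ ≤ (a / lam i + b) * D := by
      have h1 := hgrad i
      have hDeq : ‖x (i + 1) - x i‖ = D := by rw [hD, hp]
      rw [hDeq] at h1
      have h2 : ‖g i - gradient f (x i)‖ ^ 2 ≤ ((a / lam i + b) * D) ^ 2 := by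
        have hd : 0 ≤ a / lam i := by positivity
        have hexp : ((a / lam i + b) * D) ^ 2
            = (a ^ 2 / (lam i) ^ 2 + b ^ 2) * D ^ 2 + 2 * (a / lam i) * b * D ^ 2 := by
          field_simp
          ring
        rw [hexp]
        linarith [h1, mul_nonneg (mul_nonneg hd hb) (sq_nonneg D)]
      have h3 := Real.sqrt_le_sqrt h2
      rw [Real.sqrt_sq (norm_nonneg _), Real.sqrt_sq (by positivity)] at h3
      rwa [norm_sub_rev] at h3
    have hwnorm : ‖w‖ ≤ (lam i)⁻¹ * D + L * D + (a / lam i + b) * D := by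
      rw [← hGnorm]
      linarith [htri, hlipb, herr]
    set C : ℝ := (L + b) * lamMax + a + 1 with hC
    have hcoef : lam i * ((lam i)⁻¹ * D + L * D + (a / lam i + b) * D) ≤ C * D := by
      have e : lam i * ((lam i)⁻¹ * D + L * D + (a / lam i + b) * D)
          = D + L * lam i * D + a * D + b * lam i * D := by
        field_simp
        ring
      rw [e, hC]
      nlinarith [mul_le_mul_of_nonneg_left hhi (mul_nonneg hL.le hDnn),
        mul_le_mul_of_nonneg_left hhi (mul_nonneg hb hDnn)]
    have hwn2 : ‖w‖ ≤ C * ((lam i)⁻¹ * D) := by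
      have h5 : lam i * ‖w‖ ≤ C * D :=
        le_trans (mul_le_mul_of_nonneg_left hwnorm hlampos.le) hcoef
      have h6 : ‖w‖ = (lam i)⁻¹ * (lam i * ‖w‖) := by
        field_simp
      rw [h6]
      calc (lam i)⁻¹ * (lam i * ‖w‖) ≤ (lam i)⁻¹ * (C * D) :=
            mul_le_mul_of_nonneg_left h5 (inv_nonneg.mpr hlampos.le)
        _ = C * ((lam i)⁻¹ * D) := by ring
    have hkey : δ (i + 1) ≤ Υ * ‖G‖ := by
      rw [hGnorm, hΥ]
      have := mul_le_mul_of_nonneg_right hwn2 hB2.le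
      calc δ (i + 1) ≤ ⟪w, p - xstar⟫ := hsum
        _ ≤ ‖w‖ * B2 := hcs
        _ ≤ C * ((lam i)⁻¹ * D) * B2 := this
        _ = B2 * C * ((lam i)⁻¹ * D) := by ring
    -- descent inequality
    have hdesc' : δ (i + 1) - δ i ≤ -(θ * lam i / 2) * ‖G‖ ^ 2 := by
      have hdi := hdesc i
      rw [← hu, ← hpu, ← hG, ← hp] at hdi
      have hd1 : δ (i + 1) = F p - F xstar := rfl
      have hd0 : δ i = F (x i) - F xstar := rfl
      rw [hd1, hd0]
      linarith [hdi]
    have h1 : δ (i + 1) ^ 2 ≤ Υ ^ 2 * ‖G‖ ^ 2 := by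
      nlinarith [hkey, hδnn (i + 1), norm_nonneg G, hΥpos]
    have h2 : c * δ (i + 1) ^ 2 ≤ θ * lamLow / 2 * ‖G‖ ^ 2 := by
      have e : c * (Υ ^ 2 * ‖G‖ ^ 2) = θ * lamLow / 2 * ‖G‖ ^ 2 := by
        rw [hc]
        field_simp
      calc c * δ (i + 1) ^ 2 ≤ c * (Υ ^ 2 * ‖G‖ ^ 2) :=
            mul_le_mul_of_nonneg_left h1 hcpos.le
        _ = θ * lamLow / 2 * ‖G‖ ^ 2 := e
    have h3 : θ * lamLow / 2 * ‖G‖ ^ 2 ≤ θ * lam i / 2 * ‖G‖ ^ 2 := by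
      nlinarith [mul_nonneg (mul_nonneg hθ0.le (sub_nonneg.mpr hlo)) (sq_nonneg ‖G‖)]
    clear_value w G D C c δ Υ u p
    linarith [hdesc', h2, h3]
  -- conclude using the recursion lemma
  have hfin := stmt13_rec_rate c hcpos δ hrec N hN
  have hN1 : (1:ℝ) ≤ (N : ℝ) - 1 := by
    have : (2:ℝ) ≤ (N : ℝ) := by exact_mod_cast hN
    linarith
  have heq : 4 / (c * ((N : ℝ) - 1)) = 8 * Υ ^ 2 / (θ * lamLow * ((N : ℝ) - 1)) := by
    have hNne : ((N : ℝ) - 1) ≠ 0 := ne_of_gt (by linarith)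
    rw [hc]
    field_simp
    ring
  rw [heq] at hfin
  exact hfin
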